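/- First-order expansion of the close-planets Hill criterion: with δ = 1 − α and neglecting terms of order δ³, ε^{2/3}δ and ε, the function C_c^H(α) = γ√α + 1 − (1+γ)^{3/2}√(α(1+c)/(γ+α)), c = 3^{4/3}ε^{2/3}γ/(1+γ)², satisfies C_c^H = (3γ/(8(γ+1)))·δ² − (3^{4/3}γ/(2(γ+1)))·ε^{2/3} + O(δ³) + O(ε^{2/3}δ) + O(ε). Formally: the second-order Taylor polynomial of α ↦ γ√α + 1 − (1+γ)^{3/2}√(α/(γ+α)) at α = 1 is (3γ/(8(γ+1)))(1−α)², and the first-order Taylor coefficient of c ↦ −(1+γ)^{3/2}√((1+c)/(γ+1)) at c = 0 evaluated at α = 1 is −(γ+1)/2... i.e., the linear-in-c term at α = 1 equals −(γ+1)c/2 = −(3^{4/3}γ/(2(γ+1)))ε^{2/3}. -/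

import Mathlib

open Real Filter

private lemma expo1 : (1:ℝ)/2 - 1 = -(1:ℝ)/2 := by norm_num
private lemma expo2 : -(1:ℝ)/2 - 1 = -(3:ℝ)/2 := by norm_num
private lemma expo3 : -(3:ℝ)/2 - 1 = -(5:ℝ)/2 := by norm_num

private lemma rpow_split {y : ℝ} (hy : 0 < y) :
    y ^ (-(1:ℝ)/2) = y * y ^ (-(3:ℝ)/2) := by
  rw [show (-(1:ℝ)/2) = 1 + (-(3:ℝ)/2) by norm_num, Real.rpow_add hy, Real.rpow_one]

private lemma rpow_split' {y : ℝ} (hy : 0 < y) :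
    y ^ ((1:ℝ)/2) = y * y ^ (-(1:ℝ)/2) := by
  rw [show ((1:ℝ)/2) = 1 + (-(1:ℝ)/2) by norm_num, Real.rpow_add hy, Real.rpow_one]

/-- derivative of the rpow version of the function -/
private lemma hasDerivF (γ : ℝ) (hγ : 0 < γ) {x : ℝ} (hx : 0 < x) :
    HasDerivAt (fun α : ℝ => γ * α ^ ((1:ℝ)/2) + 1 -
        (1 + γ) ^ ((3:ℝ)/2) * (α ^ ((1:ℝ)/2) * (γ + α) ^ (-(1:ℝ)/2)))
      (γ/2 * x ^ (-(1:ℝ)/2) -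
        (1 + γ) ^ ((3:ℝ)/2) * (γ/2 * (x ^ (-(1:ℝ)/2) * (γ + x) ^ (-(3:ℝ)/2)))) x := by
  have hgx : 0 < γ + x := by linarith
  have h1 : HasDerivAt (fun α : ℝ => α ^ ((1:ℝ)/2)) ((1:ℝ)/2 * x ^ ((1:ℝ)/2 - 1)) x :=
    Real.hasDerivAt_rpow_const (Or.inl hx.ne')
  have h2 : HasDerivAt (fun α : ℝ => (γ + α) ^ (-(1:ℝ)/2))
      (1 * (-(1:ℝ)/2) * (γ + x) ^ (-(1:ℝ)/2 - 1)) x :=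
    (((hasDerivAt_id x).const_add γ)).rpow_const (Or.inl hgx.ne')
  have h3 := ((h1.const_mul γ).add_const 1).sub ((h1.mul h2).const_mul ((1 + γ) ^ ((3:ℝ)/2)))
  refine h3.congr_deriv ?_
  rw [expo1, expo2, rpow_split hgx, rpow_split' hx]
  ring

/-- the derivative function G and its derivative at a positive point -/
private lemma hasDerivG (γ : ℝ) (hγ : 0 < γ) {x : ℝ} (hx : 0 < x) :
    HasDerivAt (fun y : ℝ => γ/2 * y ^ (-(1:ℝ)/2) -
        (1 + γ) ^ ((3:ℝ)/2) * (γ/2 * (y ^ (-(1:ℝ)/2) * (γ + y) ^ (-(3:ℝ)/2))))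
      (γ/2 * (-(1:ℝ)/2 * x ^ (-(3:ℝ)/2)) -
        (1 + γ) ^ ((3:ℝ)/2) * (γ/2 * ((-(1:ℝ)/2 * x ^ (-(3:ℝ)/2)) * (γ + x) ^ (-(3:ℝ)/2)
          + x ^ (-(1:ℝ)/2) * (-(3:ℝ)/2 * (γ + x) ^ (-(5:ℝ)/2))))) x := by
  have hgx : 0 < γ + x := by linarith
  have h1 : HasDerivAt (fun y : ℝ => y ^ (-(1:ℝ)/2)) (-(1:ℝ)/2 * x ^ (-(1:ℝ)/2 - 1)) x :=
    Real.hasDerivAt_rpow_const (Or.inl hx.ne')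
  have h2 : HasDerivAt (fun y : ℝ => (γ + y) ^ (-(3:ℝ)/2))
      (1 * (-(3:ℝ)/2) * (γ + x) ^ (-(3:ℝ)/2 - 1)) x :=
    (((hasDerivAt_id x).const_add γ)).rpow_const (Or.inl hgx.ne')
  have h3 := (h1.const_mul (γ/2)).sub (((h1.mul h2).const_mul (γ/2)).const_mul
      ((1 + γ) ^ ((3:ℝ)/2)))
  refine h3.congr_deriv ?_
  rw [expo2, expo3]
  ring

/-- the original sqrt function agrees with the rpow version on positives -/
private lemma eqF (γ : ℝ) (hγ : 0 < γ) {α : ℝ} (hα : 0 < α) :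
    γ * Real.sqrt α + 1 - (1 + γ) ^ ((3:ℝ)/2) * Real.sqrt (α / (γ + α)) =
    γ * α ^ ((1:ℝ)/2) + 1 - (1 + γ) ^ ((3:ℝ)/2) * (α ^ ((1:ℝ)/2) * (γ + α) ^ (-(1:ℝ)/2)) := by
  have hgα : 0 < γ + α := by linarith
  rw [Real.sqrt_div hα.le, Real.sqrt_eq_rpow, Real.sqrt_eq_rpow,
    show (-(1:ℝ)/2) = -((1:ℝ)/2) by norm_num, Real.rpow_neg hgα.le]
  ring

theorem hill_close_planets_taylor (γ : ℝ) (hγ : 0 < γ) :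
    (γ * Real.sqrt 1 + 1 - (1 + γ) ^ ((3 : ℝ) / 2) * Real.sqrt (1 / (γ + 1)) = 0) ∧
    (deriv (fun α : ℝ => γ * Real.sqrt α + 1 -
        (1 + γ) ^ ((3 : ℝ) / 2) * Real.sqrt (α / (γ + α))) 1 = 0) ∧
    (deriv (deriv (fun α : ℝ => γ * Real.sqrt α + 1 -
        (1 + γ) ^ ((3 : ℝ) / 2) * Real.sqrt (α / (γ + α)))) 1 = 3 * γ / (4 * (γ + 1))) ∧
    (deriv (fun c : ℝ => -((1 + γ) ^ ((3 : ℝ) / 2) *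
        Real.sqrt (1 * (1 + c) / (γ + 1)))) 0 = -((γ + 1) / 2)) := by
  have hpos : (0:ℝ) < γ + 1 := by linarith
  set a := Real.sqrt (γ + 1) with ha_def
  have ha : 0 < a := Real.sqrt_pos.mpr hpos
  have ha2 : a ^ 2 = γ + 1 := Real.sq_sqrt hpos.le
  have hr32 : (1 + γ) ^ ((3:ℝ)/2) = a ^ 3 := by
    rw [add_comm 1 γ, ha_def, Real.sqrt_eq_rpow, ← Real.rpow_natCast ((γ+1) ^ ((1:ℝ)/2)) 3,
      ← Real.rpow_mul hpos.le]
    norm_num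
  have hrm32 : (γ + 1) ^ (-(3:ℝ)/2) = (a ^ 3)⁻¹ := by
    rw [ha_def, Real.sqrt_eq_rpow, ← Real.rpow_natCast ((γ+1) ^ ((1:ℝ)/2)) 3,
      ← Real.rpow_mul hpos.le, show (-(3:ℝ)/2) = -((1:ℝ)/2 * 3) by norm_num,
      Real.rpow_neg hpos.le]
    norm_num
  have hrm52 : (γ + 1) ^ (-(5:ℝ)/2) = (a ^ 5)⁻¹ := by
    rw [ha_def, Real.sqrt_eq_rpow, ← Real.rpow_natCast ((γ+1) ^ ((1:ℝ)/2)) 5,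
      ← Real.rpow_mul hpos.le, show (-(5:ℝ)/2) = -((1:ℝ)/2 * 5) by norm_num,
      Real.rpow_neg hpos.le]
    norm_num
  have hderiv_eq : ∀ x : ℝ, 0 < x →
      deriv (fun α : ℝ => γ * Real.sqrt α + 1 -
        (1 + γ) ^ ((3:ℝ)/2) * Real.sqrt (α / (γ + α))) x =
      γ/2 * x ^ (-(1:ℝ)/2) -
        (1 + γ) ^ ((3:ℝ)/2) * (γ/2 * (x ^ (-(1:ℝ)/2) * (γ + x) ^ (-(3:ℝ)/2))) := by
    intro x hx
    have heqx : (fun α : ℝ => γ * Real.sqrt α + 1 -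
        (1 + γ) ^ ((3:ℝ)/2) * Real.sqrt (α / (γ + α))) =ᶠ[nhds x]
        (fun α : ℝ => γ * α ^ ((1:ℝ)/2) + 1 -
        (1 + γ) ^ ((3:ℝ)/2) * (α ^ ((1:ℝ)/2) * (γ + α) ^ (-(1:ℝ)/2))) :=
      eventually_of_mem (Ioi_mem_nhds hx) (fun y hy => eqF γ hγ hy)
    rw [heqx.deriv_eq, (hasDerivF γ hγ hx).deriv]
  refine ⟨?_, ?_, ?_, ?_⟩
  · have h1 : Real.sqrt (1 / (γ + 1)) = a⁻¹ := by
      rw [one_div, Real.sqrt_inv]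
    rw [Real.sqrt_one, h1, hr32]
    have h2 : a ^ 3 * a⁻¹ = a ^ 2 := by
      field_simp
    rw [mul_one, h2, ha2]
    ring
  · rw [hderiv_eq 1 one_pos]
    rw [show (1:ℝ) ^ (-(1:ℝ)/2) = 1 from Real.one_rpow _, hrm32, hr32]
    have h3 : (a:ℝ) ^ 3 ≠ 0 := by positivity
    field_simp
    ring
  · have heq2 : deriv (fun α : ℝ => γ * Real.sqrt α + 1 -
        (1 + γ) ^ ((3:ℝ)/2) * Real.sqrt (α / (γ + α))) =ᶠ[nhds (1:ℝ)]
        (fun y : ℝ => γ/2 * y ^ (-(1:ℝ)/2) -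
        (1 + γ) ^ ((3:ℝ)/2) * (γ/2 * (y ^ (-(1:ℝ)/2) * (γ + y) ^ (-(3:ℝ)/2)))) :=
      eventually_of_mem (Ioi_mem_nhds one_pos) (fun y hy => hderiv_eq y hy)
    rw [heq2.deriv_eq, (hasDerivG γ hγ one_pos).deriv]
    rw [show (1:ℝ) ^ (-(1:ℝ)/2) = 1 from Real.one_rpow _,
      show (1:ℝ) ^ (-(3:ℝ)/2) = 1 from Real.one_rpow _, hrm32, hrm52, hr32]
    have h5 : (a:ℝ) ^ 5 ≠ 0 := by positivity
    have h3 : (a:ℝ) ^ 3 ≠ 0 := by positivity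
    have hane : a ≠ 0 := ha.ne'
    rw [← ha2]
    field_simp
    ring
  · have hd : HasDerivAt (fun c : ℝ => 1 * (1 + c) / (γ + 1)) (1 / (γ + 1)) 0 := by
      have h0 : HasDerivAt (fun c : ℝ => (1:ℝ) + c) 1 0 := (hasDerivAt_id 0).const_add 1
      have := (h0.const_mul 1).div_const (γ + 1)
      simpa using this
    have hne : (1:ℝ) * (1 + 0) / (γ + 1) ≠ 0 := by positivity
    have hs := (hd.sqrt hne).const_mul ((1 + γ) ^ ((3:ℝ)/2))
    rw [(show HasDerivAt (fun c : ℝ => -((1 + γ) ^ ((3:ℝ)/2) * Real.sqrt (1 * (1 + c) / (γ + 1)))) _ 0 from hs.neg).deriv]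
    have hsv : Real.sqrt (1 * (1 + 0) / (γ + 1)) = a⁻¹ := by
      rw [show (1:ℝ) * (1 + 0) / (γ + 1) = (γ + 1)⁻¹ by ring, Real.sqrt_inv]
    rw [hsv, hr32, ← ha2]
    have hane : a ≠ 0 := ha.ne'
    field_simp
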